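/- Let T and C be independent random variables, Y = min(T,C) and δ = 1{T ≤ C}. For a fixed u with P(C > u) > 0 and T^u = min(T, u), Y^u = min(Y, u), Δ = 1{Y > u} + 1{Y ≤ u, δ = 1}, the inverse-probability-of-censoring weighting identity holds: E[Δ g(Y^u) / G(Y^u−)] = E[g(T^u)] for any bounded measurable g, where G(t) = P(C ≥ t), provided G(Y^u−) > 0 almost surely on {Δ = 1}. (Prove it assuming C has a continuous distribution so that G(t−) = P(C ≥ t) = P(C > t) off a null set.) -/

import Mathlib

open MeasureTheory ProbabilityTheory

/-- Inverse-probability-of-censoring weighting identity: for independent event time `T`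
and censoring `C` with `C` continuously distributed, `Y = T ∧ C`, `δ = 1{T ≤ C}`,
`Y^u = Y ∧ u`, `T^u = T ∧ u`, `Δ = 1{Y > u} + 1{Y ≤ u, δ = 1}` and `G(t) = P(C ≥ t)`,
we have `E[Δ g(Y^u)/G(Y^u)] = E[g(T^u)]` for any bounded measurable `g`. -/
theorem stmt_18 {Ω : Type*} [MeasureSpace Ω] [IsProbabilityMeasure (ℙ : Measure Ω)]
    (T C : Ω → ℝ) (hTmeas : Measurable T) (hCmeas : Measurable C)
    (hTnonneg : ∀ ω, 0 ≤ T ω) (hCnonneg : ∀ ω, 0 ≤ C ω)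
    (hindep : IndepFun T C ℙ)
    (hCcont : ∀ t : ℝ, ℙ {ω | C ω = t} = 0)
    (u : ℝ) (hu : 0 < u)
    (G : ℝ → ℝ) (hG : ∀ t, G t = (ℙ {ω | t ≤ C ω}).toReal)
    (hGu : 0 < G u)
    (Y : Ω → ℝ) (hY : ∀ ω, Y ω = min (T ω) (C ω))
    (δ : Ω → ℝ) (hδ : ∀ ω, δ ω = if T ω ≤ C ω then 1 else 0)
    (Δ : Ω → ℝ)
    (hΔ : ∀ ω, Δ ω = (if u < Y ω then (1 : ℝ) else 0) +
      (if Y ω ≤ u ∧ δ ω = 1 then (1 : ℝ) else 0))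
    (g : ℝ → ℝ) (hgmeas : Measurable g) (M : ℝ) (hgbdd : ∀ x, |g x| ≤ M) :
    ∫ ω, Δ ω * g (min (Y ω) u) / G (min (Y ω) u) = ∫ ω, g (min (T ω) u) := by
  -- G is antitone, measurable, positive on (-∞, u]
  have hM0 : 0 ≤ M := le_trans (abs_nonneg _) (hgbdd 0)
  have hGanti : Antitone G := by
    intro a b hab
    rw [hG, hG]
    exact ENNReal.toReal_mono (measure_ne_top _ _)
      (measure_mono (fun ω hω => le_trans hab hω))
  have hGmeas : Measurable G := hGanti.measurable
  have hGpos : ∀ s, s ≤ u → 0 < G s := fun s hs => lt_of_lt_of_le hGu (hGanti hs)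
  set h : ℝ → ℝ := fun t => g (min t u) / G (min t u) with hh
  have hhmeas : Measurable h :=
    (hgmeas.comp (measurable_id.min measurable_const)).div
      (hGmeas.comp (measurable_id.min measurable_const))
  have hhbdd : ∀ t, |h t| ≤ M / G u := by
    intro t
    rw [hh]
    simp only
    rw [abs_div, abs_of_pos (hGpos _ (min_le_right _ _))]
    exact div_le_div₀ hM0 (hgbdd _) hGu (hGanti (min_le_right t u))
  -- map of the pair is the product measure
  have hmap : (ℙ : Measure Ω).map (fun ω => (T ω, C ω)) = ((ℙ : Measure Ω).map T).prod ((ℙ : Measure Ω).map C) :=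
    (indepFun_iff_map_prod_eq_prod_map_map hTmeas.aemeasurable hCmeas.aemeasurable).mp hindep
  -- P(T = C) = 0
  have hnullTC : ℙ {ω | T ω = C ω} = 0 := by
    have hdiag : MeasurableSet {p : ℝ × ℝ | p.1 = p.2} :=
      measurableSet_eq_fun measurable_fst measurable_snd
    have h1 : ℙ {ω | T ω = C ω} = ((ℙ : Measure Ω).map (fun ω => (T ω, C ω))) {p | p.1 = p.2} := by
      rw [Measure.map_apply (hTmeas.prodMk hCmeas) hdiag]
      rfl
    rw [h1, hmap, Measure.prod_apply hdiag]
    have h2 : ∀ t : ℝ, ((ℙ : Measure Ω).map C) (Prod.mk t ⁻¹' {p : ℝ × ℝ | p.1 = p.2}) = 0 := by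
      intro t
      have : Prod.mk t ⁻¹' {p : ℝ × ℝ | p.1 = p.2} = {t} := by
        ext c; simp [eq_comm]
      rw [this, Measure.map_apply hCmeas (measurableSet_singleton t)]
      have : C ⁻¹' {t} = {ω | C ω = t} := rfl
      rw [this]
      exact hCcont t
    simp only [h2, lintegral_zero]
  -- a.e. rewrite of the integrand
  have hae : ∀ᵐ ω ∂ℙ, Δ ω * g (min (Y ω) u) / G (min (Y ω) u)
      = (if min (T ω) u ≤ C ω then h (T ω) else 0) := by
    have h1 : ∀ᵐ ω ∂ℙ, C ω ≠ u := by
      rw [ae_iff]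
      simpa using hCcont u
    have h2 : ∀ᵐ ω ∂ℙ, T ω ≠ C ω := by
      rw [ae_iff]
      simpa using hnullTC
    filter_upwards [h1, h2] with ω hCu hTC
    rcases le_or_gt (T ω) (C ω) with hle | hlt
    · -- T ≤ C : Δ = 1, Y = T
      have hYT : Y ω = T ω := by rw [hY]; exact min_eq_left hle
      have hδ1 : δ ω = 1 := by rw [hδ, if_pos hle]
      have hΔ1 : Δ ω = 1 := by
        rw [hΔ, hYT]
        rcases lt_or_ge u (T ω) with h' | h'
        · rw [if_pos h', if_neg (by simp [not_le.mpr h'])]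
          ring
        · rw [if_neg (not_lt.mpr h'), if_pos ⟨h', hδ1⟩]
          ring
      rw [hΔ1, hYT, one_mul, if_pos (le_trans (min_le_left _ _) hle)]
    · -- C < T : δ = 0, Y = C
      have hYC : Y ω = C ω := by rw [hY]; exact min_eq_right hlt.le
      have hδ0 : δ ω = 0 := by rw [hδ, if_neg (not_le.mpr hlt)]
      rcases lt_or_ge u (C ω) with h' | h'
      · -- u < C : Δ = 1, min(Y,u) = u = min(T,u)
        have hΔ1 : Δ ω = 1 := by
          rw [hΔ, hYC, if_pos h', if_neg (by simp [not_le.mpr h'])]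
          ring
        have hmY : min (Y ω) u = u := by rw [hYC]; exact min_eq_right h'.le
        have hmT : min (T ω) u = u := min_eq_right (le_of_lt (lt_trans h' hlt))
        rw [hΔ1, hmY, one_mul, if_pos ((min_le_right _ _).trans h'.le)]
        simp only [hh]
        rw [hmT]
      · -- C < u : Δ = 0, min(T,u) > C
        have hCu' : C ω < u := lt_of_le_of_ne h' hCu
        have hΔ0 : Δ ω = 0 := by
          rw [hΔ, hYC, if_neg (not_lt.mpr h'), if_neg (by simp [hδ0])]
          ring
        have hnot : ¬ min (T ω) u ≤ C ω := not_le.mpr (lt_min hlt hCu')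
        rw [hΔ0, zero_mul, zero_div, if_neg hnot]
  rw [integral_congr_ae hae]
  -- pass to the product measure
  set f : ℝ × ℝ → ℝ := fun p => if min p.1 u ≤ p.2 then h p.1 else 0 with hf
  have hfmeas : Measurable f :=
    Measurable.ite
      (measurableSet_le (measurable_fst.min measurable_const) measurable_snd)
      (hhmeas.comp measurable_fst) measurable_const
  have hμprob : IsProbabilityMeasure ((ℙ : Measure Ω).map T) := Measure.isProbabilityMeasure_map hTmeas.aemeasurable
  have hνprob : IsProbabilityMeasure ((ℙ : Measure Ω).map C) := Measure.isProbabilityMeasure_map hCmeas.aemeasurable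
  have hfint : Integrable f (((ℙ : Measure Ω).map T).prod ((ℙ : Measure Ω).map C)) := by
    apply Integrable.mono' (integrable_const (M / G u)) hfmeas.aestronglyMeasurable
    filter_upwards with p
    rw [hf]
    simp only
    split
    · exact hhbdd _
    · simp only [norm_zero]
      positivity
  have step : ∫ ω, (if min (T ω) u ≤ C ω then h (T ω) else 0)
      = ∫ p, f p ∂(((ℙ : Measure Ω).map T).prod ((ℙ : Measure Ω).map C)) := by
    rw [← hmap, integral_map (hTmeas.prodMk hCmeas).aemeasurable hfmeas.aestronglyMeasurable]
  rw [step, MeasureTheory.integral_prod f hfint]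
  have inner : ∀ t : ℝ, ∫ c, f (t, c) ∂((ℙ : Measure Ω).map C) = g (min t u) := by
    intro t
    have heq : ∀ c : ℝ, f (t, c) = Set.indicator (Set.Ici (min t u)) (fun _ => h t) c := by
      intro c
      rw [hf]
      simp [Set.indicator, Set.mem_Ici]
    simp_rw [heq]
    rw [integral_indicator_const _ measurableSet_Ici]
    have hm : ((ℙ : Measure Ω).map C) (Set.Ici (min t u)) = ℙ {ω | min t u ≤ C ω} := by
      rw [Measure.map_apply hCmeas measurableSet_Ici]
      rfl
    rw [measureReal_def, hm, hh]
    simp only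
    rw [smul_eq_mul, ← hG, mul_comm, div_mul_cancel₀ _ (hGpos _ (min_le_right t u)).ne']
  simp_rw [inner]
  exact integral_map hTmeas.aemeasurable
    ((hgmeas.comp (measurable_id.min measurable_const)).aestronglyMeasurable)
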